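/- Let p, q ∈ ℤ. Then ∂_0(c^{-1}_p · c^1_q) = 2(a^1_{p-1}·c^2_q + a^1_p·c^2_{q-1}), ∂_1(c^{-1}_p · c^1_q) = 2(a^0_{p-1}·c^2_q + a^0_p·c^2_{q-1}), and consequently (∂_0 + ∂_1)(c^{-1}_p · c^1_q) = 2(c^1_{p-1}·c^2_q + c^1_p·c^2_{q-1}). -/
import Mathlib


/-!
The polynomial ring `R2 = ℚ[c₁, c₂, …, t₁, t₂, …]`: the variable `Sum.inl p` (for `p ≥ 1`)
is `c_p`, and `Sum.inr i` (for `i ≥ 1`) is `t_i`.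
-/

noncomputable section
open MvPolynomial Finset
open scoped Classical

abbrev R2 : Type := MvPolynomial (ℕ ⊕ ℕ) ℚ

/-- The variable `t_i`. -/
def Tv (i : ℕ) : R2 := X (Sum.inr i)

/-- `c_p`, with the conventions `c_0 = 1` and `c_p = 0` for `p < 0`. -/
def Cv (p : ℤ) : R2 := if p < 0 then 0 else if p = 0 then 1 else X (Sum.inl p.toNat)

/-- The complete homogeneous symmetric polynomial `h_j` evaluated on a list. -/
def hfun : List R2 → ℕ → R2
  | [], j => if j = 0 then 1 else 0
  | a :: L, j => ∑ i ∈ Finset.range (j + 1), a ^ i * hfun L (j - i)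

/-- The elementary symmetric polynomial `e_j` evaluated on a list. -/
def efun : List R2 → ℕ → R2
  | [], j => if j = 0 then 1 else 0
  | _ :: _, 0 => 1
  | a :: L, j + 1 => efun L (j + 1) + a * efun L j

/-- The list `(-t_1, …, -t_r)`. -/
def negT (r : ℕ) : List R2 := (List.range r).map fun i => -Tv (i + 1)

/-- `h^r_j(-t)`: complete homogeneous for `r ≥ 0`, elementary `e^{-r}_j(-t)` for `r < 0`. -/
def hmt (r : ℤ) (j : ℕ) : R2 :=
  if 0 ≤ r then hfun (negT r.toNat) j else efun (negT (-r).toNat) j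

/-- `c^r_p := Σ_{j=0}^p c_{p-j} h^r_j(-t)`. -/
def cc (r p : ℤ) : R2 := ∑ j ∈ Finset.range (p.toNat + 1), Cv (p - j) * hmt r j

/-- `a^s_p := (1/2)c_p + Σ_{j=1}^p c_{p-j} h^s_j(-t)`. -/
def aa (s p : ℤ) : R2 :=
  C (1/2 : ℚ) * Cv p + ∑ j ∈ Finset.Icc 1 p.toNat, Cv (p - j) * hmt s j

/-- Images of the variables under the automorphism `s_i`. -/
def sImg : ℕ → ℕ ⊕ ℕ → R2
  | 0, Sum.inr j => if j = 1 then -Tv 2 else if j = 2 then -Tv 1 else Tv j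
  | 0, Sum.inl p =>
      if p = 0 then X (Sum.inl 0)
      else Cv p - 2 * (Tv 1 + Tv 2) *
        ∑ j ∈ Finset.range p, (-1 : R2) ^ j *
          (∑ a ∈ Finset.range (j + 1), Tv 1 ^ a * Tv 2 ^ (j - a)) * Cv ((p : ℤ) - 1 - j)
  | i + 1, Sum.inr j =>
      if j = i + 1 then Tv (i + 2) else if j = i + 2 then Tv (i + 1) else Tv j
  | _ + 1, Sum.inl p => X (Sum.inl p)

/-- The ring automorphism `s_i` of `R2`. -/
def sA (i : ℕ) : R2 →ₐ[ℚ] R2 := aeval (sImg i)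

/-- The fraction field of `R2`. -/
abbrev KK : Type := FractionRing R2

/-- The canonical embedding of `R2` into its fraction field. -/
def toK : R2 →+* KK := algebraMap R2 KK

/-- The denominator `t_1 + t_2` (for `i = 0`) resp. `t_{i+1} - t_i` (for `i ≥ 1`). -/
def dden (i : ℕ) : R2 := if i = 0 then Tv 1 + Tv 2 else Tv (i + 1) - Tv i

/-- The divided difference operator `∂_i`, with values in the fraction field. -/
def dd (i : ℕ) (f : R2) : KK := (toK f - toK (sA i f)) / toK (dden i)

-- auxiliary lemmas
lemma Cv_neg {p : ℤ} (h : p < 0) : Cv p = 0 := by simp [Cv, h]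

lemma Cv_zero : Cv 0 = 1 := by simp [Cv]

lemma hfun_zero (L : List R2) : hfun L 0 = 1 := by
  induction L with
  | nil => simp [hfun]
  | cons a L ih => simp [hfun, ih]

lemma efun_zero (L : List R2) : efun L 0 = 1 := by
  cases L with
  | nil => simp [efun]
  | cons a L => simp [efun]

lemma hmt_zero (r : ℤ) : hmt r 0 = 1 := by
  unfold hmt; split <;> simp [hfun_zero, efun_zero]

lemma negT_one : negT 1 = [-Tv 1] := by
  rfl

lemma negT_two : negT 2 = [-Tv 1, -Tv 2] := by
  simp [negT, List.range_succ]

lemma hfun_nil (j : ℕ) : hfun [] j = if j = 0 then 1 else 0 := by simp [hfun]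

lemma hfun_single (a : R2) (m : ℕ) : hfun [a] m = a ^ m := by
  rw [hfun]
  rw [Finset.sum_eq_single m]
  · simp [hfun_nil]
  · intro i hi hne
    have := Finset.mem_range.mp hi
    rw [hfun_nil, if_neg (by omega), mul_zero]
  · intro h; exact absurd (Finset.self_mem_range_succ m) h

lemma hmt_one (j : ℕ) : hmt 1 j = (-Tv 1) ^ j := by
  rw [hmt, if_pos (by norm_num)]
  norm_num [negT_one, hfun_single]

lemma hmt_zero' (j : ℕ) : hmt 0 j = if j = 0 then 1 else 0 := by
  rw [hmt, if_pos le_rfl]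
  simp [negT, hfun_nil]

lemma hmt_neg_one_rec (j : ℕ) :
    hmt (-1) (j + 1) = hmt 0 (j + 1) + (-Tv 1) * hmt 0 j := by
  rw [hmt, if_neg (by norm_num)]
  have : ((-(-1) : ℤ).toNat) = 1 := rfl
  rw [this, negT_one]
  cases j with
  | zero => simp [efun, hmt_zero']
  | succ k => simp [efun, hmt_zero']

lemma hmt_two (j : ℕ) :
    hmt 2 j = ∑ i ∈ Finset.range (j + 1), (-Tv 1) ^ i * (-Tv 2) ^ (j - i) := by
  rw [hmt, if_pos (by norm_num)]
  rw [show ((2:ℤ).toNat) = 2 from rfl, negT_two, hfun]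
  apply Finset.sum_congr rfl
  intro i hi
  rw [hfun_single]

lemma hmt_one_rec (j : ℕ) :
    hmt 1 (j + 1) = hmt 2 (j + 1) + Tv 2 * hmt 2 j := by
  have h2 : hmt 2 (j+1) = (-Tv 2) * hmt 2 j + (-Tv 1)^(j+1) := by
    rw [hmt_two, hmt_two, Finset.sum_range_succ]
    rw [Finset.mul_sum]
    congr 1
    · apply Finset.sum_congr rfl
      intro i hi
      have : j + 1 - i = (j - i) + 1 := by
        simp at hi; omega
      rw [this, pow_succ]
      ring
    · simp
  rw [h2, hmt_one]
  ring

lemma cc_neg (r : ℤ) {p : ℤ} (h : p < 0) : cc r p = 0 := by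
  rw [cc, show p.toNat = 0 by omega]
  simp [Cv_neg h]

lemma cc_at_zero (r : ℤ) : cc r 0 = 1 := by
  rw [cc]
  simp [hmt_zero, Cv_zero]

lemma cc_succ (r : ℤ) {q : ℤ} (hq : 0 < q) :
    cc r q = Cv q + ∑ k ∈ Finset.range ((q - 1).toNat + 1), Cv (q - 1 - ↑k) * hmt r (k + 1) := by
  have hn : q.toNat + 1 = ((q - 1).toNat + 1) + 1 := by omega
  rw [cc, hn, Finset.sum_range_succ']
  have harg : ∀ k : ℕ, q - (↑(k + 1) : ℤ) = q - 1 - ↑k := by intro k; push_cast; ring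
  rw [Finset.sum_congr rfl (fun k _ => by rw [harg k])]
  simp [hmt_zero]
  ring

lemma cc_rec (r r' : ℤ) (x : R2)
    (hrec : ∀ j : ℕ, hmt r' (j + 1) = hmt r (j + 1) + x * hmt r j) (q : ℤ) :
    cc r' q = cc r q + x * cc r (q - 1) := by
  rcases lt_trichotomy q 0 with hq | hq | hq
  · rw [cc_neg _ hq, cc_neg _ hq, cc_neg _ (by omega : q - 1 < 0)]
    ring
  · subst hq
    rw [cc_at_zero, cc_at_zero, cc_neg _ (by norm_num : (0:ℤ) - 1 < 0)]
    ring
  · rw [cc_succ r' hq, cc_succ r hq, cc]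
    have e1 : ∀ k ∈ Finset.range ((q-1).toNat + 1),
        Cv (q - 1 - ↑k) * hmt r' (k+1)
          = Cv (q - 1 - ↑k) * hmt r (k+1) + x * (Cv (q - 1 - ↑k) * hmt r k) := by
      intro k _
      rw [hrec k]
      ring
    rw [Finset.sum_congr rfl e1, Finset.sum_add_distrib, ← Finset.mul_sum]
    ring
lemma cc_zero_eq (q : ℤ) : cc 0 q = Cv q := by
  rw [cc]
  rw [Finset.sum_eq_single 0]
  · simp [hmt_zero]
  · intro i _ hne
    rw [hmt_zero', if_neg hne, mul_zero]
  · intro h; simp at h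

lemma R1 (q : ℤ) : Cv q = cc 1 q + Tv 1 * cc 1 (q - 1) := by
  rw [← cc_zero_eq q]
  apply cc_rec
  intro j
  rw [hmt_one, hmt_one, hmt_zero']
  simp [pow_succ]
  ring

lemma R3 (q : ℤ) : cc 1 q = cc 2 q + Tv 2 * cc 2 (q - 1) := by
  apply cc_rec
  exact hmt_one_rec

lemma Rm1 (p : ℤ) : cc (-1) p = Cv p - Tv 1 * Cv (p - 1) := by
  rw [← cc_zero_eq p, ← cc_zero_eq (p - 1)]
  have := cc_rec 0 (-1) (-Tv 1) hmt_neg_one_rec p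
  rw [this]; ring

lemma Crec (q : ℤ) :
    Cv q = cc 2 q + (Tv 1 + Tv 2) * cc 2 (q - 1) + Tv 1 * Tv 2 * cc 2 (q - 2) := by
  have h1 := R1 q
  have h2 := R3 q
  have h3 := R3 (q - 1)
  rw [show q - 1 - 1 = q - 2 by ring] at h3
  rw [h1, h2, h3]
  ring

lemma Icc_sum_eq (n : ℕ) (f : ℕ → R2) :
    ∑ j ∈ Finset.Icc 1 n, f j = ∑ j ∈ Finset.range n, f (j + 1) := by
  rw [← Finset.Ico_add_one_right_eq_Icc, Finset.sum_Ico_eq_sum_range]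
  simp [add_comm]

lemma cc_split (r m : ℤ) :
    cc r m = Cv m + ∑ j ∈ Finset.Icc 1 m.toNat, Cv (m - j) * hmt r j := by
  rcases le_or_gt m 0 with hm | hm
  · rcases lt_or_eq_of_le hm with hm' | hm'
    · rw [cc_neg _ hm', Cv_neg hm', show m.toNat = 0 by omega]
      simp
    · subst hm'
      rw [cc_at_zero, Cv_zero]
      simp
  · rw [cc_succ r hm, Icc_sum_eq]
    have hn : m.toNat = (m - 1).toNat + 1 := by omega
    rw [hn]
    congr 1
    apply Finset.sum_congr rfl
    intro k _
    congr 2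
    push_cast; ring

lemma aa0_eq (m : ℤ) : aa 0 m = C (1/2 : ℚ) * Cv m := by
  rw [aa]
  have : ∑ j ∈ Finset.Icc 1 m.toNat, Cv (m - j) * hmt 0 j = 0 := by
    apply Finset.sum_eq_zero
    intro j hj
    have : j ≠ 0 := by simp at hj; omega
    rw [hmt_zero', if_neg this, mul_zero]
  rw [this, add_zero]

lemma aa1_add_aa0 (m : ℤ) : aa 1 m + aa 0 m = cc 1 m := by
  rw [aa, aa0_eq, cc_split 1 m]
  have : C (1/2 : ℚ) * Cv m + C (1/2 : ℚ) * Cv m = Cv m := by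
    rw [← add_mul, ← map_add]
    norm_num
  linear_combination this

lemma two_aa1 (m : ℤ) : (2 : R2) * aa 1 m = 2 * cc 1 m - Cv m := by
  have h := aa1_add_aa0 m
  have h0 := aa0_eq m
  have : (2 : R2) * (C (1/2 : ℚ) * Cv m) = Cv m := by
    rw [(map_ofNat C 2).symm, ← mul_assoc, ← map_mul]
    norm_num
  linear_combination 2 * h - 2 * h0 - this

lemma two_aa0 (m : ℤ) : (2 : R2) * aa 0 m = Cv m := by
  rw [aa0_eq]
  rw [(map_ofNat C 2).symm, ← mul_assoc, ← map_mul]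
  norm_num

lemma sA1_t1 : sA 1 (Tv 1) = Tv 2 := by
  rw [Tv, sA, aeval_X]
  rfl

lemma sA1_t2 : sA 1 (Tv 2) = Tv 1 := by
  rw [Tv, sA, aeval_X]
  rfl

lemma sA0_t1 : sA 0 (Tv 1) = -Tv 2 := by
  rw [Tv, sA, aeval_X]
  rfl

lemma sA0_t2 : sA 0 (Tv 2) = -Tv 1 := by
  rw [Tv, sA, aeval_X]
  rfl

lemma sA1_Cv (p : ℤ) : sA 1 (Cv p) = Cv p := by
  rw [Cv]
  split
  · simp
  · split
    · simp
    · rw [sA, aeval_X]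
      rfl

lemma sA1_hmt2 (j : ℕ) : sA 1 (hmt 2 j) = hmt 2 j := by
  rw [hmt_two, map_sum]
  have e : ∀ i ∈ Finset.range (j + 1),
      sA 1 ((-Tv 1) ^ i * (-Tv 2) ^ (j - i)) = (-Tv 2) ^ i * (-Tv 1) ^ (j - i) := by
    intro i _
    rw [map_mul, map_pow, map_pow, map_neg, map_neg, sA1_t1, sA1_t2]
  rw [Finset.sum_congr rfl e]
  rw [← Finset.sum_range_reflect]
  apply Finset.sum_congr rfl
  intro i hi
  have hij : i ≤ j := by simp at hi; omega
  rw [show j + 1 - 1 - i = j - i by omega, show j - (j - i) = i by omega, mul_comm]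

lemma sA1_cc2 (q : ℤ) : sA 1 (cc 2 q) = cc 2 q := by
  rw [cc, map_sum]
  apply Finset.sum_congr rfl
  intro j _
  rw [map_mul, sA1_Cv, sA1_hmt2]

lemma sA1_cc1 (q : ℤ) : sA 1 (cc 1 q) = cc 2 q + Tv 1 * cc 2 (q - 1) := by
  rw [R3 q, map_add, map_mul, sA1_t2, sA1_cc2, sA1_cc2]

lemma sA1_ccm1 (p : ℤ) : sA 1 (cc (-1) p) = Cv p - Tv 2 * Cv (p - 1) := by
  rw [Rm1 p, map_sub, map_mul, sA1_t1, sA1_Cv, sA1_Cv]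

lemma hmt_two_H (j : ℕ) :
    hmt 2 j = (-1 : R2) ^ j * ∑ a ∈ Finset.range (j + 1), Tv 1 ^ a * Tv 2 ^ (j - a) := by
  rw [hmt_two, Finset.mul_sum]
  apply Finset.sum_congr rfl
  intro i hi
  have hij : i ≤ j := by simp at hi; omega
  rw [neg_pow (Tv 1), neg_pow (Tv 2)]
  rw [show (-1 : R2) ^ j = (-1) ^ i * (-1) ^ (j - i) by
    rw [← pow_add]; congr 1; omega]
  ring

lemma Dv_eq (p : ℤ) : sA 0 (Cv p) = Cv p - 2 * (Tv 1 + Tv 2) * cc 2 (p - 1) := by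
  rcases lt_trichotomy p 0 with hp | hp | hp
  · rw [Cv_neg hp, cc_neg _ (by omega : p - 1 < 0), map_zero]
    ring
  · subst hp
    rw [Cv_zero, cc_neg _ (by norm_num : (0:ℤ) - 1 < 0), map_one]
    ring
  · have hCv : Cv p = X (Sum.inl p.toNat) := by
      rw [Cv, if_neg (by omega), if_neg (by omega)]
    rw [hCv, sA, aeval_X]
    have hne : p.toNat ≠ 0 := by omega
    show (if p.toNat = 0 then X (Sum.inl 0) else Cv p.toNat - 2 * (Tv 1 + Tv 2) *
        ∑ j ∈ Finset.range p.toNat, (-1 : R2) ^ j *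
          (∑ a ∈ Finset.range (j + 1), Tv 1 ^ a * Tv 2 ^ (j - a)) * Cv ((p.toNat : ℤ) - 1 - j)) = _
    rw [if_neg hne]
    have hc : ((p.toNat : ℤ)) = p := by omega
    rw [hc, ← hCv]
    congr 1
    congr 1
    rw [cc, show (p-1).toNat + 1 = p.toNat by omega]
    apply Finset.sum_congr rfl
    intro j _
    rw [hmt_two_H, show p - 1 - (j : ℤ) = p - 1 - j by ring]
    ring

lemma Yq (q : ℤ) : sA 0 (cc 1 q) = cc 2 q - Tv 1 * cc 2 (q - 1) := by
  rcases lt_or_ge q 0 with hq | hq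
  · rw [cc_neg _ hq, cc_neg _ hq, cc_neg _ (by omega : q - 1 < 0), map_zero]
    ring
  · lift q to ℕ using hq
    induction q with
    | zero =>
        rw [show ((0:ℕ) : ℤ) = 0 by norm_num, cc_at_zero, cc_at_zero,
          cc_neg _ (by norm_num : (0:ℤ) - 1 < 0), map_one]
        ring
    | succ n ih =>
        have hr : cc 1 ((n + 1 : ℕ) : ℤ) = Cv ((n+1 : ℕ) : ℤ) - Tv 1 * cc 1 (((n+1 : ℕ) : ℤ) - 1) := by
          have := R1 ((n+1 : ℕ) : ℤ)
          linear_combination -this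
        rw [hr, map_sub, map_mul, sA0_t1, Dv_eq]
        rw [show ((n+1 : ℕ) : ℤ) - 1 = (n : ℤ) by push_cast; ring, ih]
        rw [Crec ((n+1 : ℕ) : ℤ)]
        rw [show ((n+1 : ℕ) : ℤ) - 1 = (n : ℤ) by push_cast; ring]
        rw [show ((n+1 : ℕ) : ℤ) - 2 = (n : ℤ) - 1 by push_cast; ring]
        ring

lemma key0 (p q : ℤ) :
    cc (-1) p * cc 1 q - sA 0 (cc (-1) p * cc 1 q)
      = 2 * (aa 1 (p - 1) * cc 2 q + aa 1 p * cc 2 (q - 1)) * (Tv 1 + Tv 2) := by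
  rw [map_mul]
  rw [show cc (-1) p = Cv p - Tv 1 * Cv (p - 1) from Rm1 p]
  rw [map_sub, map_mul, sA0_t1, Dv_eq p, Dv_eq (p - 1), Yq q]
  have hA := R3 q
  have hB1 := two_aa1 (p - 1)
  have hB2 := two_aa1 p
  have hC1 := R3 (p - 1)
  have hC2 := R3 p
  have hCr := Crec p
  rw [show p - 2 = p - 1 - 1 by ring] at hCr
  linear_combination (Cv p - Tv 1 * Cv (p-1)) * hA
    - (Tv 1 + Tv 2) * cc 2 q * hB1
    - (Tv 1 + Tv 2) * cc 2 (q-1) * hB2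
    - 2*(Tv 1 + Tv 2) * cc 2 q * hC1
    - 2*(Tv 1 + Tv 2) * cc 2 (q-1) * hC2
    + 2*(Tv 1 + Tv 2) * cc 2 (q-1) * hCr

lemma key1 (p q : ℤ) :
    cc (-1) p * cc 1 q - sA 1 (cc (-1) p * cc 1 q)
      = 2 * (aa 0 (p - 1) * cc 2 q + aa 0 p * cc 2 (q - 1)) * (Tv 2 - Tv 1) := by
  rw [map_mul, sA1_ccm1, sA1_cc1, Rm1 p, R3 q]
  have h0' := two_aa0 (p - 1)
  have h0 := two_aa0 p
  linear_combination -(Tv 2 - Tv 1) * cc 2 q * h0' - (Tv 2 - Tv 1) * cc 2 (q - 1) * h0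

lemma poly_den0_ne : (Tv 1 + Tv 2 : R2) ≠ 0 := by
  intro h
  have := congrArg (eval (fun v => if v = Sum.inr 1 then (1 : ℚ) else 0)) h
  simp [Tv] at this

lemma poly_den1_ne : (Tv 2 - Tv 1 : R2) ≠ 0 := by
  intro h
  have := congrArg (eval (fun v => if v = Sum.inr 1 then (1 : ℚ) else 0)) h
  simp [Tv] at this

lemma toK_ne {f : R2} (hf : f ≠ 0) : toK f ≠ 0 := by
  rw [toK]
  exact fun h => hf (IsFractionRing.injective R2 KK (by rw [h, map_zero]))

lemma dden_zero : dden 0 = Tv 1 + Tv 2 := by simp [dden]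

lemma dden_one : dden 1 = Tv 2 - Tv 1 := by simp [dden]

theorem statement7 (p q : ℤ) :
    dd 0 (cc (-1) p * cc 1 q) = toK (2 * (aa 1 (p - 1) * cc 2 q + aa 1 p * cc 2 (q - 1))) ∧
    dd 1 (cc (-1) p * cc 1 q) = toK (2 * (aa 0 (p - 1) * cc 2 q + aa 0 p * cc 2 (q - 1))) ∧
    dd 0 (cc (-1) p * cc 1 q) + dd 1 (cc (-1) p * cc 1 q) =
      toK (2 * (cc 1 (p - 1) * cc 2 q + cc 1 p * cc 2 (q - 1))) := by
  have h0 : dd 0 (cc (-1) p * cc 1 q)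
      = toK (2 * (aa 1 (p - 1) * cc 2 q + aa 1 p * cc 2 (q - 1))) := by
    rw [dd, dden_zero, div_eq_iff (toK_ne poly_den0_ne), ← map_sub, ← map_mul]
    exact congrArg toK (key0 p q)
  have h1 : dd 1 (cc (-1) p * cc 1 q)
      = toK (2 * (aa 0 (p - 1) * cc 2 q + aa 0 p * cc 2 (q - 1))) := by
    rw [dd, dden_one, div_eq_iff (toK_ne poly_den1_ne), ← map_sub, ← map_mul]
    exact congrArg toK (key1 p q)
  refine ⟨h0, h1, ?_⟩
  rw [h0, h1, ← map_add]
  congr 1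
  have e1 := aa1_add_aa0 (p - 1)
  have e2 := aa1_add_aa0 p
  linear_combination 2 * cc 2 q * e1 + 2 * cc 2 (q - 1) * e2
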